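/- Suppose for every finite symmetric generating set S of a group H, one can find κ ∈ ℕ (independent of S) and a subset T ⊆ S^{≤κ} with #T ≥ #S/(2N₀) (for a constant N₀ independent of S) freely generating a free subgroup, and suppose additionally ω(H,S) ≥ c₀ > 0 for all S. Then there is κ' > 0 with ω(H,S) ≥ κ'·log(#S) for every finite symmetric generating set S of H. -/

import Mathlib

open Filter Topology Pointwise

def wordBall {H : Type*} [Group H] (S : Set H) (n : ℕ) : Set H :=
  {h | ∃ l : List H, l.length ≤ n ∧ (∀ x ∈ l, x ∈ S) ∧ l.prod = h}

section Aux

variable {H : Type*} [Group H]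

lemma aux_one_mem_wordBall (S : Set H) (n : ℕ) : (1 : H) ∈ wordBall S n :=
  ⟨[], by simp⟩

lemma aux_mul_mem_wordBall {S : Set H} {m k : ℕ} {a b : H}
    (ha : a ∈ wordBall S m) (hb : b ∈ wordBall S k) : a * b ∈ wordBall S (m + k) := by
  obtain ⟨l₁, h₁, h₁', rfl⟩ := ha
  obtain ⟨l₂, h₂, h₂', rfl⟩ := hb
  refine ⟨l₁ ++ l₂, ?_, ?_, by simp⟩
  · simpa using Nat.add_le_add h₁ h₂
  · intro x hx
    rcases List.mem_append.1 hx with h | h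
    · exact h₁' x h
    · exact h₂' x h

lemma aux_list_prod_mem_wordBall {S : Set H} {κ : ℕ} :
    ∀ l : List H, (∀ x ∈ l, x ∈ wordBall S κ) → l.prod ∈ wordBall S (l.length * κ) := by
  intro l
  induction l with
  | nil => intro _; simpa using aux_one_mem_wordBall S 0
  | cons a t ih =>
    intro h
    have : a * t.prod ∈ wordBall S (κ + t.length * κ) :=
      aux_mul_mem_wordBall (h a (by simp)) (ih fun x hx => h x (by simp [hx]))
    simpa [List.length_cons, Nat.succ_mul, Nat.add_comm] using this

lemma aux_pow_finite {S : Set H} (hS : S.Finite) : ∀ n : ℕ, (S ^ n : Set H).Finite := by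
  intro n
  induction n with
  | zero => simp
  | succ n ih => rw [pow_succ]; exact ih.mul hS

lemma aux_wordBall_finite {S : Set H} (hS : S.Finite) (n : ℕ) : (wordBall S n).Finite := by
  have hsub : wordBall S n ⊆ ⋃ k ∈ Finset.range (n + 1), (S ^ k : Set H) := by
    rintro h ⟨l, hlen, hmem, rfl⟩
    have hp : l.prod ∈ (S ^ l.length : Set H) := by
      clear hlen
      induction l with
      | nil => simp
      | cons a t ih =>
        rw [List.prod_cons, List.length_cons, pow_succ']
        exact Set.mul_mem_mul (hmem a (by simp)) (ih fun x hx => hmem x (by simp [hx]))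
    exact Set.mem_biUnion (Finset.mem_range.2 (Nat.lt_succ_of_le hlen)) hp
  exact (Set.Finite.biUnion (Finset.finite_toSet _) fun k _ => aux_pow_finite hS k).subset hsub

lemma aux_reduce_map_true {α : Type*} [DecidableEq α] (l : List α) :
    FreeGroup.reduce (l.map fun a => (a, true)) = l.map fun a => (a, true) := by
  induction l with
  | nil => simp
  | cons a t ih =>
    rw [List.map_cons, FreeGroup.reduce.cons, ih]
    cases ht : t.map fun a => (a, true) with
    | nil => simp
    | cons b u =>
      have hb : b.2 = true := by
        have : b ∈ t.map fun a => (a, true) := by rw [ht]; simp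
        rcases List.mem_map.1 this with ⟨c, _, rfl⟩
        rfl
      simp [hb]

lemma aux_prod_of_eq_mk {α : Type*} (l : List α) :
    (l.map FreeGroup.of).prod = FreeGroup.mk (l.map fun a => (a, true)) := by
  induction l with
  | nil => simpa using FreeGroup.one_eq_mk
  | cons a t ih =>
    rw [List.map_cons, List.prod_cons, ih, List.map_cons]
    show FreeGroup.mk [(a, true)] * _ = _
    rw [FreeGroup.mul_mk]
    rfl

lemma aux_prod_of_injective {α : Type*} :
    Function.Injective (fun l : List α => (l.map FreeGroup.of).prod) := by
  classical
  intro l₁ l₂ h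
  simp only [aux_prod_of_eq_mk] at h
  have h2 := congrArg FreeGroup.toWord h
  rw [FreeGroup.toWord_mk, FreeGroup.toWord_mk, aux_reduce_map_true, aux_reduce_map_true] at h2
  exact List.map_injective_iff.2 (fun a b hab => congrArg Prod.fst hab) h2

lemma aux_card_pow_le {S T : Set H} {κ : ℕ} (hS : S.Finite)
    (hTsub : T ⊆ wordBall S κ)
    (hinj : Function.Injective ⇑(FreeGroup.lift (Subtype.val : T → H))) (n : ℕ) :
    T.ncard ^ n ≤ Nat.card (wordBall S (n * κ)) := by
  classical
  have hfin : Finite (wordBall S (n * κ)) := (aux_wordBall_finite hS (n * κ)).to_subtype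
  set Φ : (Fin n → T) → (wordBall S (n * κ)) := fun f =>
    ⟨(List.ofFn fun i => ((f i : H))).prod, by
      have := aux_list_prod_mem_wordBall (S := S) (κ := κ) (List.ofFn fun i => ((f i : H)))
        (by intro x hx
            rcases List.mem_ofFn.1 hx with ⟨i, rfl⟩
            exact hTsub (f i).2)
      simpa using this⟩ with hΦ
  have hΦinj : Function.Injective Φ := by
    intro f g hfg
    have hval : (List.ofFn fun i => ((f i : H))).prod = (List.ofFn fun i => ((g i : H))).prod :=
      congrArg Subtype.val hfg
    have key : ∀ h : Fin n → T,
        (List.ofFn fun i => ((h i : H))).prod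
          = FreeGroup.lift (Subtype.val : T → H) (((List.ofFn h).map FreeGroup.of).prod) := by
      intro h
      rw [map_list_prod, List.map_map, List.map_ofFn]
      refine congrArg List.prod (congrArg List.ofFn (funext fun i => ?_))
      simp [FreeGroup.lift_apply_of]
    rw [key f, key g] at hval
    have := aux_prod_of_injective (hinj hval)
    exact List.ofFn_inj.1 this
  have hcard := Nat.card_le_card_of_injective Φ hΦinj
  have : Nat.card (Fin n → T) = T.ncard ^ n := by
    have : Finite T := ((aux_wordBall_finite hS κ).subset hTsub).to_subtype
    rw [Nat.card_fun, Nat.card_coe_set_eq, Nat.card_eq_fintype_card, Fintype.card_fin]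
  rwa [this] at hcard

end Aux

theorem stmt19 {H : Type*} [Group H]
    (κ : ℕ) (hκ : 0 < κ) (N₀ : ℝ) (hN₀ : 0 < N₀) (c₀ : ℝ) (hc₀ : 0 < c₀)
    -- the growth rate function `S ↦ ω(H,S)`:
    (ω : Set H → ℝ)
    (hω : ∀ S : Set H, S.Finite → (∀ s ∈ S, s⁻¹ ∈ S) → Subgroup.closure S = ⊤ →
      Tendsto (fun n : ℕ => Real.log (Nat.card (wordBall S n)) / n) atTop (𝓝 (ω S)))
    -- every generating set contains, in its `κ`-ball, a free subset of size `≥ #S/(2N₀)`: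
    (hfree : ∀ S : Set H, S.Finite → (∀ s ∈ S, s⁻¹ ∈ S) → Subgroup.closure S = ⊤ →
      ∃ T : Set H, T ⊆ wordBall S κ ∧ T.Finite ∧
        (T.ncard : ℝ) ≥ (S.ncard : ℝ) / (2 * N₀) ∧
        Function.Injective ⇑(FreeGroup.lift (Subtype.val : T → H)))
    -- a uniform positive lower bound on the growth rate:
    (hc : ∀ S : Set H, S.Finite → (∀ s ∈ S, s⁻¹ ∈ S) → Subgroup.closure S = ⊤ →
      c₀ ≤ ω S) :
    ∃ κ' > (0 : ℝ), ∀ S : Set H, S.Finite → (∀ s ∈ S, s⁻¹ ∈ S) →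
      Subgroup.closure S = ⊤ → ω S ≥ κ' * Real.log S.ncard := by
  set M : ℝ := max 1 (Real.log ((2 * N₀) ^ 2)) with hM
  have hM1 : (1 : ℝ) ≤ M := le_max_left _ _
  have hMpos : (0 : ℝ) < M := lt_of_lt_of_le one_pos hM1
  set κ' : ℝ := min (1 / (2 * κ)) (c₀ / M) with hκ'
  have hκ'pos : 0 < κ' := by
    apply lt_min
    · positivity
    · positivity
  refine ⟨κ', hκ'pos, ?_⟩
  intro S hSfin hSsym hSgen
  obtain ⟨T, hTsub, hTfin, hTcard, hTinj⟩ := hfree S hSfin hSsym hSgen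
  set s : ℝ := (S.ncard : ℝ) with hs
  have hs0 : 0 ≤ s := Nat.cast_nonneg _
  by_cases hbig : s ≤ (2 * N₀) ^ 2
  · -- small case: use c₀
    have hlog : Real.log s ≤ M := by
      rcases le_or_gt s 1 with h1 | h1
      · calc Real.log s ≤ Real.log 1 := by
              rcases eq_or_lt_of_le hs0 with h0 | h0
              · simp [← h0]
              · exact Real.log_le_log h0 h1
            _ ≤ M := by simp; linarith
      · exact le_trans (Real.log_le_log (by linarith) hbig) (le_max_right _ _)
    have : κ' * Real.log s ≤ c₀ := by
      rcases le_or_gt (Real.log s) 0 with h0 | h0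
      · nlinarith
      · calc κ' * Real.log s ≤ (c₀ / M) * Real.log s := by
              apply mul_le_mul_of_nonneg_right (min_le_right _ _) h0.le
            _ ≤ (c₀ / M) * M := by
              apply mul_le_mul_of_nonneg_left hlog (by positivity)
            _ = c₀ := by field_simp
    exact le_trans this (hc S hSfin hSsym hSgen)
  · -- large case: use the free subgroup
    push_neg at hbig
    have hspos : 0 < s := lt_trans (by positivity) hbig
    have hsqrt_pos : 0 < Real.sqrt s := Real.sqrt_pos.2 hspos
    have h2N : 2 * N₀ ≤ Real.sqrt s := (Real.le_sqrt (by positivity) hs0).2 hbig.le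
    have hsqrt_le : Real.sqrt s ≤ s / (2 * N₀) := by
      rw [le_div_iff₀ (by positivity)]
      calc Real.sqrt s * (2 * N₀) ≤ Real.sqrt s * Real.sqrt s :=
            mul_le_mul_of_nonneg_left h2N hsqrt_pos.le
        _ = s := Real.mul_self_sqrt hs0
    have hT_ge_sqrt : Real.sqrt s ≤ (T.ncard : ℝ) := le_trans hsqrt_le hTcard
    have hT1 : 1 ≤ T.ncard := by
      by_contra h
      push_neg at h
      interval_cases h' : T.ncard <;> simp_all <;> linarith
    have hT1' : (1 : ℝ) ≤ (T.ncard : ℝ) := by exact_mod_cast hT1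
    have hlogT : Real.log s / 2 ≤ Real.log (T.ncard : ℝ) := by
      rw [← Real.log_sqrt hs0]
      exact Real.log_le_log hsqrt_pos hT_ge_sqrt
    have hlogT0 : 0 ≤ Real.log (T.ncard : ℝ) := Real.log_nonneg hT1'
    -- ω S ≥ log T.ncard / κ
    have hωT : Real.log (T.ncard : ℝ) / κ ≤ ω S := by
      have htend : Tendsto (fun n : ℕ =>
          Real.log (Nat.card (wordBall S (n * κ))) / ((n * κ : ℕ) : ℝ)) atTop (𝓝 (ω S)) := by
        exact (hω S hSfin hSsym hSgen).comp
          (tendsto_atTop_mono (fun n => Nat.le_mul_of_pos_right n hκ) tendsto_id)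
      refine ge_of_tendsto htend ?_
      filter_upwards [eventually_ge_atTop 1] with n hn
      have hcard : T.ncard ^ n ≤ Nat.card (wordBall S (n * κ)) :=
        aux_card_pow_le hSfin hTsub hTinj n
      have hcardR : ((T.ncard : ℝ)) ^ n ≤ (Nat.card (wordBall S (n * κ)) : ℝ) := by
        exact_mod_cast hcard
      have hlogcard : (n : ℝ) * Real.log (T.ncard : ℝ)
          ≤ Real.log (Nat.card (wordBall S (n * κ))) := by
        rw [← Real.log_pow]
        exact Real.log_le_log (by positivity) hcardR
      have hnκpos : (0 : ℝ) < ((n * κ : ℕ) : ℝ) := by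
        have : 0 < n * κ := Nat.mul_pos hn hκ
        exact_mod_cast this
      rw [div_le_div_iff₀ (by exact_mod_cast hκ) hnκpos]
      calc Real.log (T.ncard : ℝ) * ((n * κ : ℕ) : ℝ)
          = ((n : ℝ) * Real.log (T.ncard : ℝ)) * (κ : ℝ) := by push_cast; ring
        _ ≤ Real.log (Nat.card (wordBall S (n * κ))) * (κ : ℝ) := by
            apply mul_le_mul_of_nonneg_right hlogcard (by positivity)
    have hlogs0 : 0 ≤ Real.log s := Real.log_nonneg (by
      have h1 : (1 : ℕ) ≤ S.ncard := by
        by_contra h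
        push_neg at h
        interval_cases h' : S.ncard <;> simp_all <;> linarith
      show (1 : ℝ) ≤ (S.ncard : ℝ)
      exact_mod_cast h1)
    calc κ' * Real.log s ≤ (1 / (2 * κ)) * Real.log s :=
          mul_le_mul_of_nonneg_right (min_le_left _ _) hlogs0
      _ = (Real.log s / 2) / κ := by
          rw [div_div]
          ring
      _ ≤ Real.log (T.ncard : ℝ) / κ := by
          gcongr
      _ ≤ ω S := hωT
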